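/- Let n ≥ 1 and 0 ≤ p ≤ n be integers, and let d, ξ : {1,…,n} → ℝ. Write a² = ∑_i ξ_i², T = ∑_i d_i ξ_i², and R = ∑_i d_i² ξ_i². Then ∑_{|I|=p} ∑_{i∈I} ∑_{k∉I} ξ_i² ξ_k² (2 d_i d_k − d_i² − d_k²) = 2·C(n−2,p−1)·(T² − a²·R). -/
import Mathlib


/-- Binomial coefficient with the convention `C a b = 0` if `b < 0` or `b > a`. -/
def C (a b : ℤ) : ℤ := if 0 ≤ b ∧ b ≤ a then (a.toNat.choose b.toNat : ℤ) else 0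

lemma count_lemma (n p : ℕ) (hp : 1 ≤ p) (i k : Fin n) (hik : i ≠ k) :
    ((Finset.powersetCard p (Finset.univ : Finset (Fin n))).filter
      (fun I => i ∈ I ∧ k ∉ I)).card = Nat.choose (n - 2) (p - 1) := by
  have hcard : (Finset.univ \ {i, k} : Finset (Fin n)).card = n - 2 := by
    rw [Finset.card_sdiff_of_subset (by simp)]
    simp [Finset.card_pair hik]
  rw [← hcard, ← Finset.card_powersetCard]
  apply Finset.card_bij (fun I _ => I.erase i)
  · intro I hI
    simp only [Finset.mem_filter, Finset.mem_powersetCard] at hI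
    obtain ⟨⟨_, hc⟩, hi, hk⟩ := hI
    rw [Finset.mem_powersetCard]
    constructor
    · intro x hx
      simp only [Finset.mem_erase] at hx
      simp only [Finset.mem_sdiff, Finset.mem_univ, Finset.mem_insert, Finset.mem_singleton]
      refine ⟨trivial, ?_⟩
      rintro (rfl | rfl)
      · exact hx.1 rfl
      · exact hk hx.2
    · rw [Finset.card_erase_of_mem hi, hc]
  · intro I hI I' hI' h
    simp only [Finset.mem_filter] at hI hI'
    rw [← Finset.insert_erase hI.2.1, ← Finset.insert_erase hI'.2.1, h]
  · intro J hJ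
    rw [Finset.mem_powersetCard] at hJ
    obtain ⟨hsub, hc⟩ := hJ
    have hiJ : i ∉ J := fun h => by simpa using (hsub h)
    have hkJ : k ∉ J := fun h => by simpa using (hsub h)
    refine ⟨insert i J, ?_, ?_⟩
    · simp only [Finset.mem_filter, Finset.mem_powersetCard]
      refine ⟨⟨Finset.subset_univ _, ?_⟩, Finset.mem_insert_self _ _, ?_⟩
      · rw [Finset.card_insert_of_notMem hiJ, hc]; omega
      · simp only [Finset.mem_insert]
        rintro (rfl | h)
        · exact hik rfl
        · exact hkJ h
    · rw [Finset.erase_insert hiJ]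

lemma C_eq (n p : ℕ) (hn : 2 ≤ n) (hp1 : 1 ≤ p) (hp : p ≤ n) :
    C ((n : ℤ) - 2) ((p : ℤ) - 1) = (Nat.choose (n - 2) (p - 1) : ℤ) := by
  unfold C
  rcases le_or_gt p (n - 1) with h | h
  · rw [if_pos (by omega)]
    have h1 : ((n : ℤ) - 2).toNat = n - 2 := by omega
    have h2 : ((p : ℤ) - 1).toNat = p - 1 := by omega
    rw [h1, h2]
  · have hpn : p = n := by omega
    rw [if_neg (by omega), Nat.choose_eq_zero_of_lt (by omega)]
    simp

theorem stmt13 (n p : ℕ) (hn : 1 ≤ n) (hp : p ≤ n) (d ξ : Fin n → ℝ) :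
    ∑ I ∈ Finset.powersetCard p (Finset.univ : Finset (Fin n)),
        ∑ i ∈ I, ∑ k ∈ Iᶜ, ξ i ^ 2 * ξ k ^ 2 * (2 * d i * d k - d i ^ 2 - d k ^ 2) =
      2 * (C ((n : ℤ) - 2) ((p : ℤ) - 1) : ℝ) *
        ((∑ i, d i * ξ i ^ 2) ^ 2 - (∑ i, ξ i ^ 2) * (∑ i, d i ^ 2 * ξ i ^ 2)) := by
  set f : Fin n → Fin n → ℝ :=
    fun i k => ξ i ^ 2 * ξ k ^ 2 * (2 * d i * d k - d i ^ 2 - d k ^ 2) with hf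
  -- case n = 1
  rcases eq_or_lt_of_le hn with h1 | hn2
  · have hn1 : n = 1 := h1.symm
    subst hn1
    have hL : ∑ I ∈ Finset.powersetCard p (Finset.univ : Finset (Fin 1)),
        ∑ i ∈ I, ∑ k ∈ Iᶜ, f i k = 0 := by
      apply Finset.sum_eq_zero; intro I _
      apply Finset.sum_eq_zero; intro i hi
      apply Finset.sum_eq_zero; intro k hk
      exact absurd hi (by simpa [Subsingleton.elim i k] using hk)
    rw [hL, show ((∑ i : Fin 1, d i * ξ i ^ 2) ^ 2 -
        (∑ i : Fin 1, ξ i ^ 2) * (∑ i : Fin 1, d i ^ 2 * ξ i ^ 2)) = 0 by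
      simp [Fin.sum_univ_one]; ring, mul_zero]
  -- case p = 0
  rcases Nat.eq_zero_or_pos p with hp0 | hp1
  · subst hp0
    have hC : C ((n : ℤ) - 2) ((0 : ℕ) - 1 : ℤ) = 0 := by
      unfold C; rw [if_neg (by omega)]
    rw [hC]
    simp [Finset.powersetCard_zero]
  -- main case
  have step1 : ∑ I ∈ Finset.powersetCard p (Finset.univ : Finset (Fin n)),
      ∑ i ∈ I, ∑ k ∈ Iᶜ, f i k =
      ∑ i : Fin n, ∑ k : Fin n, ∑ I ∈ Finset.powersetCard p (Finset.univ : Finset (Fin n)),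
        if i ∈ I ∧ k ∉ I then f i k else 0 := by
    have h1 : ∀ (g : Fin n → ℝ) (I : Finset (Fin n)),
        ∑ i ∈ I, g i = ∑ i : Fin n, if i ∈ I then g i else 0 := by
      intro g I; rw [Finset.sum_ite_mem, Finset.univ_inter]
    rw [show (∑ I ∈ Finset.powersetCard p (Finset.univ : Finset (Fin n)),
        ∑ i ∈ I, ∑ k ∈ Iᶜ, f i k) =
        ∑ I ∈ Finset.powersetCard p (Finset.univ : Finset (Fin n)),
        ∑ i : Fin n, ∑ k : Fin n, if i ∈ I ∧ k ∉ I then f i k else 0 from ?_]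
    · rw [Finset.sum_comm]
      exact Finset.sum_congr rfl fun i _ => Finset.sum_comm
    · refine Finset.sum_congr rfl fun I _ => ?_
      rw [h1]
      refine Finset.sum_congr rfl fun i _ => ?_
      by_cases hi : i ∈ I
      · simp only [hi, if_true, true_and]
        rw [h1]
        exact Finset.sum_congr rfl fun k _ => by simp [Finset.mem_compl]
      · simp [hi]
  have step2 : ∀ i k : Fin n,
      (∑ I ∈ Finset.powersetCard p (Finset.univ : Finset (Fin n)),
        if i ∈ I ∧ k ∉ I then f i k else 0) =
      (Nat.choose (n - 2) (p - 1) : ℝ) * f i k := by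
    intro i k
    by_cases h : i = k
    · subst h
      rw [show f i i = 0 by rw [hf]; ring]
      simp
    · rw [← Finset.sum_filter, Finset.sum_const, count_lemma n p hp1 i k h, nsmul_eq_mul]
  have expand : (∑ i : Fin n, ∑ k : Fin n, f i k) =
      2 * ((∑ i, d i * ξ i ^ 2) ^ 2 - (∑ i, ξ i ^ 2) * (∑ i, d i ^ 2 * ξ i ^ 2)) := by
    have e1 : (∑ i, d i * ξ i ^ 2) ^ 2 =
        ∑ i : Fin n, ∑ k : Fin n, (d i * ξ i ^ 2) * (d k * ξ k ^ 2) := by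
      rw [sq, Finset.sum_mul_sum]
    have e2 : (∑ i, ξ i ^ 2) * (∑ i, d i ^ 2 * ξ i ^ 2) =
        ∑ i : Fin n, ∑ k : Fin n, ξ i ^ 2 * (d k ^ 2 * ξ k ^ 2) :=
      Finset.sum_mul_sum _ _ _ _
    have e3 : (∑ i, ξ i ^ 2) * (∑ i, d i ^ 2 * ξ i ^ 2) =
        ∑ i : Fin n, ∑ k : Fin n, (d i ^ 2 * ξ i ^ 2) * ξ k ^ 2 := by
      rw [mul_comm, Finset.sum_mul_sum]
    have key : ∀ i k : Fin n, f i k =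
        2 * ((d i * ξ i ^ 2) * (d k * ξ k ^ 2)) - ξ i ^ 2 * (d k ^ 2 * ξ k ^ 2)
          - (d i ^ 2 * ξ i ^ 2) * ξ k ^ 2 := by
      intro i k; rw [hf]; ring
    calc (∑ i : Fin n, ∑ k : Fin n, f i k)
        = ∑ i : Fin n, ∑ k : Fin n,
            (2 * ((d i * ξ i ^ 2) * (d k * ξ k ^ 2)) - ξ i ^ 2 * (d k ^ 2 * ξ k ^ 2)
              - (d i ^ 2 * ξ i ^ 2) * ξ k ^ 2) :=
          Finset.sum_congr rfl fun i _ => Finset.sum_congr rfl fun k _ => key i k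
      _ = 2 * (∑ i : Fin n, ∑ k : Fin n, (d i * ξ i ^ 2) * (d k * ξ k ^ 2))
            - (∑ i : Fin n, ∑ k : Fin n, ξ i ^ 2 * (d k ^ 2 * ξ k ^ 2))
            - (∑ i : Fin n, ∑ k : Fin n, (d i ^ 2 * ξ i ^ 2) * ξ k ^ 2) := by
          simp only [Finset.sum_sub_distrib, Finset.mul_sum]
      _ = 2 * ((∑ i, d i * ξ i ^ 2) ^ 2 - (∑ i, ξ i ^ 2) * (∑ i, d i ^ 2 * ξ i ^ 2)) := by
          rw [← e1, ← e2, ← e3]; ring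
  rw [step1]
  simp only [step2]
  simp only [← Finset.mul_sum]
  rw [expand, C_eq n p hn2 hp1 hp]
  push_cast
  ring
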